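/- Let (α_k)_{k∈ℕ} be a sequence of nonnegative reals. If there exists C > 0 such that for all M, N ∈ ℕ one has ∑_{k=M+1}^{M+N} α_k ≤ C·α_M, then there exist C' > 0 and q ∈ (0,1) such that α_{M+N} ≤ C'·q^N·α_M for all M, N ∈ ℕ. Specifically, one can take q = (C⁻¹+1)⁻¹ and C' = C+1. -/

import Mathlib

/-- Tail summability implies R-linear convergence, with explicit constants
`q = (C⁻¹ + 1)⁻¹` and `C' = C + 1`. -/
theorem tail_summability_implies_R_linear
    (α : ℕ → ℝ) (hα : ∀ k, 0 ≤ α k) (C : ℝ) (hC : 0 < C)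
    (h : ∀ M N : ℕ, ∑ k ∈ Finset.Icc (M + 1) (M + N), α k ≤ C * α M) :
    (0 : ℝ) < (C⁻¹ + 1)⁻¹ ∧ (C⁻¹ + 1)⁻¹ < 1 ∧ (0 : ℝ) < C + 1 ∧
      ∀ M N : ℕ, α (M + N) ≤ (C + 1) * ((C⁻¹ + 1)⁻¹) ^ N * α M := by
  set q : ℝ := (C⁻¹ + 1)⁻¹ with hq
  have hCi : 0 < C⁻¹ := inv_pos.mpr hC
  have hq0 : 0 < q := inv_pos.mpr (by linarith)
  have hq1 : q < 1 := by
    rw [hq, inv_lt_one_iff₀]; right; linarith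
  have hqmul : q * (C⁻¹ + 1) = 1 := inv_mul_cancel₀ (by linarith)
  -- t m n := ∑ k in Icc (m+1) (m+n), α k
  have tnonneg : ∀ m n : ℕ, 0 ≤ ∑ k ∈ Finset.Icc (m + 1) (m + n), α k := fun m n =>
    Finset.sum_nonneg fun k _ => hα k
  -- split : t m (n+1) = α (m+1) + t (m+1) n
  have split : ∀ m n : ℕ, ∑ k ∈ Finset.Icc (m + 1) (m + (n + 1)), α k
      = α (m + 1) + ∑ k ∈ Finset.Icc (m + 1 + 1) (m + 1 + n), α k := by
    intro m n
    have e : m + (n + 1) = m + 1 + n := by omega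
    rw [e, Finset.Icc_eq_cons_Ioc (by omega), Finset.sum_cons, Finset.Icc_add_one_left_eq_Ioc]
  -- key contraction step
  have step : ∀ m n : ℕ, ∑ k ∈ Finset.Icc (m + 1 + 1) (m + 1 + n), α k
      ≤ q * ∑ k ∈ Finset.Icc (m + 1) (m + (n + 1)), α k := by
    intro m n
    have h1 : ∑ k ∈ Finset.Icc (m + 1 + 1) (m + 1 + n), α k ≤ C * α (m + 1) := h (m + 1) n
    have h2 : C⁻¹ * ∑ k ∈ Finset.Icc (m + 1 + 1) (m + 1 + n), α k ≤ α (m + 1) := by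
      rw [inv_mul_le_iff₀ hC]; linarith [h1]
    have h3 := split m n
    have := tnonneg (m + 1) n
    nlinarith [mul_le_mul_of_nonneg_left h2 hq0.le]
  -- iterate: t (M+j) n ≤ q^j * C * α M
  have iter : ∀ j M n : ℕ, ∑ k ∈ Finset.Icc (M + j + 1) (M + j + n), α k
      ≤ q ^ j * C * α M := by
    intro j
    induction j with
    | zero => intro M n; simpa using h M n
    | succ j ih =>
      intro M n
      have h1 := step (M + j) n
      have h2 := ih M (n + 1)
      have : q * ∑ k ∈ Finset.Icc (M + j + 1) (M + j + (n + 1)), α k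
          ≤ q * (q ^ j * C * α M) := mul_le_mul_of_nonneg_left h2 hq0.le
      calc ∑ k ∈ Finset.Icc (M + (j + 1) + 1) (M + (j + 1) + n), α k
          = ∑ k ∈ Finset.Icc (M + j + 1 + 1) (M + j + 1 + n), α k := by ring_nf
        _ ≤ q * ∑ k ∈ Finset.Icc (M + j + 1) (M + j + (n + 1)), α k := h1
        _ ≤ q * (q ^ j * C * α M) := this
        _ = q ^ (j + 1) * C * α M := by ring
  refine ⟨hq0, hq1, by linarith, ?_⟩
  intro M N
  cases N with
  | zero =>
    simp only [pow_zero, mul_one, Nat.add_zero]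
    nlinarith [hα M]
  | succ N =>
    have h1 := iter N M 1
    have h2 : ∑ k ∈ Finset.Icc (M + N + 1) (M + N + 1), α k = α (M + N + 1) := by simp
    rw [h2] at h1
    have key : α (M + (N + 1)) ≤ q ^ N * C * α M := by
      have : M + (N + 1) = M + N + 1 := by omega
      rw [this]; exact h1
    have : q ^ N * C = (C + 1) * q ^ (N + 1) := by
      have : (C + 1) * q = C := by
        field_simp [hq]; linear_combination C * hqmul - q * mul_inv_cancel₀ hC.ne'
      calc q ^ N * C = q ^ N * ((C + 1) * q) := by rw [this]
        _ = (C + 1) * q ^ (N + 1) := by ring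
    linarith [key, this ▸ key]
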